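/- Let p be a prime and let G be a finite group whose Sylow p-subgroups are not normal in G. Then the set of p-elements of G cannot be covered by p Sylow p-subgroups of G; that is, for any Sylow p-subgroups P_1, ..., P_p of G, there is a p-element of G lying in none of them. In particular, if ν_p(G) = p + 1 then G does not have a redundant Sylow p-subgroup. -/
import Mathlib

private lemma sylow_cover_aux (p : ℕ) [Fact p.Prime] (G : Type*) [Group G] [Finite G]
    (hnn : ∀ P : Sylow p G, ¬ (P : Subgroup G).Normal) (f : Fin p → Sylow p G) :
    ∃ x : G, (∃ k : ℕ, orderOf x = p ^ k) ∧ ∀ i : Fin p, x ∉ (f i : Subgroup G) := by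
  classical
  have hp := (Fact.out : p.Prime)
  -- the number of Sylow p-subgroups exceeds p
  have hne1 : Nat.card (Sylow p G) ≠ 1 := by
    intro h
    obtain ⟨P⟩ := (inferInstance : Nonempty (Sylow p G))
    apply hnn P
    have := Sylow.card_eq_index_normalizer P
    rw [h] at this
    exact Subgroup.normalizer_eq_top_iff.mp (Subgroup.index_eq_one.mp this.symm)
  have hmod : Nat.card (Sylow p G) ≡ 1 [MOD p] := card_sylow_modEq_one p G
  have hpos : 0 < Nat.card (Sylow p G) := Nat.card_pos
  have hdvd : p ∣ Nat.card (Sylow p G) - 1 :=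
    (Nat.modEq_iff_dvd' hpos).mp hmod.symm
  have hgt : p < Nat.card (Sylow p G) := by
    have := Nat.le_of_dvd (by omega) hdvd
    omega
  -- get a Sylow P not among f i
  have hns : ¬ Function.Surjective f := by
    intro hs
    have := Nat.card_le_card_of_surjective f hs
    simp only [Nat.card_eq_fintype_card, Fintype.card_fin] at this
    omega
  rw [Function.Surjective] at hns
  push_neg at hns
  obtain ⟨P, hfP⟩ := hns
  -- counting inside P
  have : Fintype ((P : Subgroup G) : Type _) := Fintype.ofFinite _
  obtain ⟨n, hn⟩ := IsPGroup.iff_card.mp P.isPGroup'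
  have hPbot : (P : Subgroup G) ≠ ⊥ := fun h => hnn P (h ▸ inferInstance)
  have hKne1 : Nat.card ((P : Subgroup G) : Type _) ≠ 1 :=
    fun h => hPbot (Subgroup.card_eq_one.mp h)
  have hn0 : n ≠ 0 := by rintro rfl; rw [pow_zero] at hn; exact hKne1 hn
  -- subgroups H i of P
  set H : Fin p → Subgroup ((P : Subgroup G) : Type _) :=
    fun i => ((f i : Subgroup G)).subgroupOf (P : Subgroup G) with hH
  have hHproper : ∀ i, H i ≠ ⊤ := by
    intro i htop
    apply hfP i
    have hle : (P : Subgroup G) ≤ (f i : Subgroup G) :=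
      (Subgroup.subgroupOf_eq_top).mp htop
    exact Sylow.ext (P.3 (f i).2 hle)
  -- each H i has small cardinality
  have hbound : ∀ i, p * Nat.card (H i) ≤ Nat.card ((P : Subgroup G) : Type _) := by
    intro i
    have h1 := Subgroup.card_mul_index (H i)
    have h2 : (H i).index ∣ p ^ n := hn ▸ Subgroup.index_dvd_card (H i)
    obtain ⟨m, hm, hm2⟩ := (Nat.dvd_prime_pow hp).mp h2
    have hm0 : m ≠ 0 := by
      rintro rfl
      exact hHproper i (Subgroup.index_eq_one.mp (by simpa using hm2))
    have : p ≤ (H i).index := hm2 ▸ Nat.le_self_pow hm0 p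
    calc p * Nat.card (H i) ≤ (H i).index * Nat.card (H i) :=
          Nat.mul_le_mul_right _ this
      _ = Nat.card ((P : Subgroup G) : Type _) := by rw [mul_comm]; exact h1
  -- find an element of P outside all H i
  have key : ∃ x : ((P : Subgroup G) : Type _), ∀ i, x ∉ H i := by
    by_contra hcon
    push_neg at hcon
    set F : Fin p → Finset ((P : Subgroup G) : Type _) :=
      fun i => Finset.univ.filter (fun x => x ∈ H i) with hF
    have hFcard : ∀ i, (F i).card = Nat.card (H i) := by
      intro i
      rw [Nat.card_eq_fintype_card, Fintype.card_subtype]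
    have h1mem : ∀ i, (1 : ((P : Subgroup G) : Type _)) ∈ F i := by
      intro i; simp [hF, (H i).one_mem]
    have hsub : (Finset.univ : Finset ((P : Subgroup G) : Type _)) ⊆
        insert 1 (Finset.univ.biUnion fun i => (F i).erase 1) := by
      intro x _
      obtain ⟨i, hi⟩ := hcon x
      by_cases hx1 : x = 1
      · simp [hx1]
      · refine Finset.mem_insert_of_mem (Finset.mem_biUnion.mpr ⟨i, Finset.mem_univ _, ?_⟩)
        exact Finset.mem_erase.mpr ⟨hx1, by simp [hF, hi]⟩
    have hc1 := Finset.card_le_card hsub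
    have hc2 := Finset.card_insert_le (1 : ((P : Subgroup G) : Type _))
      (Finset.univ.biUnion fun i => (F i).erase 1)
    have hc3 := Finset.card_biUnion_le (s := (Finset.univ : Finset (Fin p)))
      (t := fun i => (F i).erase 1)
    -- bound each term
    set d := p ^ (n - 1) with hd
    have hpd : p * d = Nat.card ((P : Subgroup G) : Type _) := by
      rw [hn, hd, ← pow_succ']
      congr 1
      omega
    have hterm : ∀ i ∈ Finset.univ, ((F i).erase 1).card ≤ d - 1 := by
      intro i _
      rw [Finset.card_erase_of_mem (h1mem i), hFcard i]
      have := hbound i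
      have hcle : Nat.card (H i) ≤ d := by
        rw [← hpd] at this
        exact Nat.le_of_mul_le_mul_left this hp.pos
      omega
    have hsum := Finset.sum_le_sum hterm
    have hsum2 : (Finset.univ.sum fun _ : Fin p => (d - 1)) = p * (d - 1) := by
      simp [Finset.sum_const, mul_comm]
    have hd1 : 1 ≤ d := Nat.one_le_iff_ne_zero.mpr (pow_ne_zero _ hp.pos.ne')
    have hmul : p * (d - 1) + p = p * d := by
      rw [← Nat.mul_succ]
      congr 1
      omega
    have huniv : (Finset.univ : Finset ((P : Subgroup G) : Type _)).card
        = Nat.card ((P : Subgroup G) : Type _) := by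
      rw [Finset.card_univ, Nat.card_eq_fintype_card]
    have hp2 : 2 ≤ p := hp.two_le
    rw [huniv, ← hpd] at hc1
    rw [hsum2] at hsum
    omega
  obtain ⟨x, hx⟩ := key
  refine ⟨(x : G), ?_, ?_⟩
  · obtain ⟨k, hk⟩ := (IsPGroup.iff_orderOf.mp P.isPGroup') x
    exact ⟨k, by rw [Subgroup.orderOf_coe]; exact hk⟩
  · intro i hmem
    exact hx i ((Subgroup.mem_subgroupOf).mpr hmem)


/-- `G` has a redundant Sylow `p`-subgroup if there is a Sylow `p`-subgroup `P` such that
every `p`-element of `G` lies in some Sylow `p`-subgroup different from `P`. -/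
def HasRedundantSylow (p : ℕ) (G : Type*) [Group G] : Prop :=
  ∃ P : Sylow p G, ∀ x : G, (∃ k : ℕ, orderOf x = p ^ k) →
    ∃ Q : Sylow p G, Q ≠ P ∧ x ∈ (Q : Subgroup G)

/-- if the Sylow `p`-subgroups of a finite group `G` are not normal, then the
set of `p`-elements of `G` cannot be covered by `p` Sylow `p`-subgroups; in particular, if
`ν_p(G) = p + 1` then `G` has no redundant Sylow `p`-subgroup. -/
theorem pElements_not_covered_by_p_sylows
    (p : ℕ) [Fact p.Prime] (G : Type*) [Group G] [Finite G]
    (hnn : ∀ P : Sylow p G, ¬ (P : Subgroup G).Normal) :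
    (∀ f : Fin p → Sylow p G, ∃ x : G, (∃ k : ℕ, orderOf x = p ^ k) ∧
      ∀ i : Fin p, x ∉ (f i : Subgroup G)) ∧
    (Nat.card (Sylow p G) = p + 1 → ¬ HasRedundantSylow p G) := by
  classical
  refine ⟨sylow_cover_aux p G hnn, ?_⟩
  rintro hcard ⟨P, hP⟩
  have : Fintype (Sylow p G) := Fintype.ofFinite _
  have hc : Fintype.card {Q : Sylow p G // Q ≠ P} = p := by
    have h1 := Fintype.card_subtype_compl (fun Q : Sylow p G => Q = P)
    rw [Fintype.card_subtype_eq] at h1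
    rw [Nat.card_eq_fintype_card] at hcard
    simp only [ne_eq]
    omega
  obtain ⟨e⟩ : Nonempty (Fin p ≃ {Q : Sylow p G // Q ≠ P}) :=
    ⟨(Fintype.equivFinOfCardEq hc).symm⟩
  obtain ⟨x, hx, hnotin⟩ := sylow_cover_aux p G hnn (fun i => (e i).1)
  obtain ⟨Q, hQP, hxQ⟩ := hP x hx
  have := hnotin (e.symm ⟨Q, hQP⟩)
  rw [e.apply_symm_apply] at this
  exact this hxQ
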